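/- arXiv:0909.5684 — 7 statements merged into one kernel-verified Lean document; each statement's English description precedes it below -/
import Mathlib

section
/- Let 𝔽 be a field, let m be a positive integer, and let M : [m] × [m] × [m] → 𝔽 be a three-dimensional matrix. Let M₁ be the m × m² matrix with entries M₁[x,(y,z)] = M[x,y,z] and let M₂ be the m × m² matrix with entries M₂[y,(x,z)] = M[x,y,z]. If the matrix rank of M₁ is at most r₁ and the matrix rank of M₂ is at most r₂, then M has tensor rank at most r₁·r₂; that is, there exist vectors v_p, u_p, w_p ∈ 𝔽^m for p ∈ [r₁·r₂] such that M[x,y,z] = Σ_{p=1}^{r₁ r₂} v_p[x]·u_p[y]·w_p[z] for all x, y, z ∈ [m]. -/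
/-!
Flatten `M` along `x`: since `M₁` has rank at most `r₁`, `M₁ = B * (D * M₁)` with inner
dimension `r₁`, so `M[x,y,z] = ∑ᵢ B[x,i] Nᵢ[y,z]` where `Nᵢ[y,z] = ∑ₓ D[i,x] M[x,y,z]`.
Each slice `Nᵢ` is `M₂` times a matrix, so it has rank at most `r₂` and splits into `r₂`
rank-one matrices, giving `r₁ r₂` rank-one tensors in total.
-/

open Matrix Submodule Set

theorem Matrix.exists_eq_mul_mul_of_rank_le {K ι κ : Type*} [Field K] [Fintype ι] [Fintype κ]
    (A : Matrix ι κ K) {r : ℕ} (h : A.rank ≤ r) :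
    ∃ (B : Matrix ι (Fin r) K) (D : Matrix (Fin r) ι K), A = B * (D * A) := by
  classical
  rw [rank_eq_finrank_span_row, ← Module.finrank_fin_fun K (n := r)] at h
  obtain ⟨f, hf⟩ := finrank_le_iff_exists_linearMap.mp h
  obtain ⟨g, hgf⟩ := f.exists_leftInverse_of_injective (LinearMap.ker_eq_bot.mpr hf)
  have hD : ∀ j, ∃ d : ι → K, d ᵥ* A = g (Pi.single j 1) := fun j => by
    simpa [← range_vecMulLinear] using (g (Pi.single j 1)).2
  choose D hD using hD
  let B : Matrix ι (Fin r) K := of fun i => f ⟨A i, subset_span (mem_range_self i)⟩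
  refine ⟨B, of D, funext fun i => ?_⟩
  calc A i = g (B i) := by
        rw [show B i = f _ from rfl, ← LinearMap.comp_apply, hgf, LinearMap.id_apply]
    _ = ∑ j, B i j • (D j ᵥ* A) := by
        conv_lhs => rw [← (Pi.basisFun K (Fin r)).sum_repr (B i)]
        simp [hD]
    _ = B i ᵥ* (of D * A) := by
        rw [vecMul_eq_sum]; rfl
    _ = (B * (of D * A)) i := rfl

theorem rank_contract_le_rank_flatten {K α β γ : Type*} [Field K] [Fintype α] [Fintype γ]
    (M : α → β → γ → K) (d : α → K) :
    (of fun (y : β) (z : γ) => ∑ x, d x * M x y z).rank ≤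
      (of fun (y : β) (xz : α × γ) => M xz.1 y xz.2).rank := by
  classical
  have hmul : (of fun (y : β) (z : γ) => ∑ x, d x * M x y z) =
      (of fun (y : β) (xz : α × γ) => M xz.1 y xz.2) *
        of fun (xz : α × γ) (z : γ) => if xz.2 = z then d xz.1 else 0 := by
    ext y z
    simp [mul_apply, Fintype.sum_prod_type, mul_comm]
  exact hmul ▸ rank_mul_le_left _ _

theorem exists_sum_mul_mul_of_rank_flatten_le {K α β γ : Type*} [Field K]
    [Fintype α] [Fintype β] [Fintype γ] (M : α → β → γ → K) {r₁ r₂ : ℕ}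
    (h₁ : (of fun (x : α) (yz : β × γ) => M x yz.1 yz.2).rank ≤ r₁)
    (h₂ : (of fun (y : β) (xz : α × γ) => M xz.1 y xz.2).rank ≤ r₂) :
    ∃ (v : Fin r₁ × Fin r₂ → α → K) (u : Fin r₁ × Fin r₂ → β → K)
      (w : Fin r₁ × Fin r₂ → γ → K), ∀ x y z, M x y z = ∑ p, v p x * u p y * w p z := by
  obtain ⟨B, D, hBD⟩ := exists_eq_mul_mul_of_rank_le _ h₁
  have hslice : ∀ i, ∃ (U : Matrix β (Fin r₂) K) (W : Matrix (Fin r₂) γ K),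
      (of fun (y : β) (z : γ) => ∑ x, D i x * M x y z) = U * W := fun i => by
    obtain ⟨U, E, hUE⟩ :=
      exists_eq_mul_mul_of_rank_le _ ((rank_contract_le_rank_flatten M (D i)).trans h₂)
    exact ⟨U, _, hUE⟩
  choose U W hUW using hslice
  refine ⟨fun p x => B x p.1, fun p y => U p.1 y p.2, fun p z => W p.1 p.2 z, fun x y z => ?_⟩
  calc M x y z = ∑ i, B x i * ∑ x', D i x' * M x' y z := by
        simpa [mul_apply] using congr_fun₂ hBD x (y, z)
    _ = ∑ i, B x i * ∑ j, U i y j * W i j z := by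
        simp_rw [← mul_apply, ← hUW, of_apply]
    _ = _ := by
        simp [Fintype.sum_prod_type, Finset.mul_sum, mul_assoc]

theorem stmt_0_general (𝔽 : Type*) [Field 𝔽] (m : ℕ)
    (M : Fin m → Fin m → Fin m → 𝔽) (r₁ r₂ : ℕ)
    (h₁ : (Matrix.of fun (x : Fin m) (yz : Fin m × Fin m) => M x yz.1 yz.2).rank ≤ r₁)
    (h₂ : (Matrix.of fun (y : Fin m) (xz : Fin m × Fin m) => M xz.1 y xz.2).rank ≤ r₂) :
    ∃ v u w : Fin (r₁ * r₂) → Fin m → 𝔽,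
      ∀ x y z, M x y z = ∑ p, v p x * u p y * w p z := by
  obtain ⟨v, u, w, hM⟩ := exists_sum_mul_mul_of_rank_flatten_le M h₁ h₂
  refine ⟨v ∘ finProdFinEquiv.symm, u ∘ finProdFinEquiv.symm, w ∘ finProdFinEquiv.symm,
    fun x y z => ?_⟩
  rw [hM, ← finProdFinEquiv.symm.sum_comp]
  rfl

/-- If the two induced (flattened) matrices `M₁` and `M₂` of a
three-dimensional matrix `M : 𝔽^{m×m×m}` have rank at most `r₁` and `r₂`
respectively, then `M` has tensor rank at most `r₁ · r₂`. -/
theorem stmt_0 (𝔽 : Type*) [Field 𝔽] (m : ℕ) (hm : 0 < m)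
    (M : Fin m → Fin m → Fin m → 𝔽) (r₁ r₂ : ℕ)
    (h₁ : (Matrix.of fun (x : Fin m) (yz : Fin m × Fin m) => M x yz.1 yz.2).rank ≤ r₁)
    (h₂ : (Matrix.of fun (y : Fin m) (xz : Fin m × Fin m) => M xz.1 y xz.2).rank ≤ r₂) :
    ∃ v u w : Fin (r₁ * r₂) → Fin m → 𝔽,
      ∀ x y z, M x y z = ∑ p, v p x * u p y * w p z :=
  stmt_0_general 𝔽 m M r₁ r₂ h₁ h₂
end

section
/- Let 𝔽 be a field, let k ≥ 1, let m₁,…,m_k be positive integers, and let T : [m₁] × ⋯ × [m_k] → 𝔽 be a k-tensor. For each i ∈ [k], let d_i be the matrix rank of the 2-flattening of T corresponding to the partition ({i}, [k] \ {i}). Then T has tensor rank at most d₁·d₂⋯d_{k−1}; that is, T can be written as a sum of d₁⋯d_{k−1} pure tensors. -/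
/-- The 2-flattening of a `k`-tensor `T` corresponding to the partition
`({i}, [k] \ {i})`: rows are indexed by `Fin (m i)`, columns by the remaining
partial indices. -/
def flattenSingle {𝔽 : Type*} {k : ℕ} {m : Fin k → ℕ}
    (T : (∀ i, Fin (m i)) → 𝔽) (i : Fin k) :
    Matrix (Fin (m i)) ((j : {j : Fin k // j ≠ i}) → Fin (m j.1)) 𝔽 :=
  Matrix.of fun a g =>
    T fun j => if h : j = i then Fin.cast (congrArg m h).symm a else g ⟨j, h⟩

/-! Let `U i` be the column space of the `i`-th flattening, of dimension `d i`, and extend the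
coordinate functionals of a basis `u i` of `U i` to functionals `f i` on all of `𝔽^(m i)`, so that
`P i w = ∑ s, f i s w • u i s` is the identity on `U i`. Every mode-`i` fibre of `T` lies in `U i`,
so applying `P i` in mode `i` leaves `T` unchanged. Doing this for every mode but the last, and
pushing each `P j` through the decomposition obtained so far (it is linear and acts on mode `j`
only), writes `T` as a sum over `s` of the product of the `u i (s i) (x i)` for `i < k - 1`
times a function of the last coordinate alone: `d₁ ⋯ d_{k-1}` pure tensors. -/

open Function Module

theorem Submodule.exists_sum_dual_smul_eq {K V : Type*} [Field K] [AddCommGroup V] [Module K V]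
    (U : Submodule K V) [FiniteDimensional K U] {d : ℕ} (hd : finrank K U = d) :
    ∃ (u : Fin d → V) (f : Fin d → Dual K V), ∀ w ∈ U, ∑ s, f s w • u s = w := by
  let b := Module.finBasisOfFinrankEq K U hd
  choose f hf using fun s => LinearMap.exists_extend (b.coord s)
  refine ⟨fun s => b s, f, fun w hw => ?_⟩
  have hcoord : ∀ s, f s w = b.repr ⟨w, hw⟩ s := fun s => LinearMap.congr_fun (hf s) ⟨w, hw⟩
  simp only [hcoord]
  simpa only [Submodule.coe_sum, Submodule.coe_smul] using congrArg Subtype.val (b.sum_repr ⟨w, hw⟩)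

section MergedRank

variable {ι : Type*} {α : ι → Type*} {R : Type*} [CommSemiring R]

/-- `T` has rank at most `N` once all modes outside `S` are merged into a single mode. -/
def MergedRankLE (T : (∀ i, α i) → R) (S : Finset ι) (N : ℕ) : Prop :=
  ∃ (v : Fin N → ∀ i, α i → R) (F : Fin N → (∀ i, α i) → R),
    (∀ p, DependsOn (F p) (↑S)ᶜ) ∧ ∀ x, T x = ∑ p, (∏ i ∈ S, v p i (x i)) * F p x

theorem mergedRankLE_empty (T : (∀ i, α i) → R) : MergedRankLE T ∅ 1 :=
  ⟨fun _ _ _ => 1, fun _ => T, fun _ => by simpa using dependsOn_univ T, by simp⟩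

theorem MergedRankLE.split_off [DecidableEq ι] {T : (∀ i, α i) → R} {S : Finset ι} {N : ℕ}
    (hT : MergedRankLE T S N) {j : ι} (hj : j ∉ S) {d : ℕ} (u : Fin d → α j → R)
    (f : Fin d → Dual R (α j → R))
    (hfix : ∀ x, T x = ∑ s, u s (x j) * f s (fun a => T (update x j a))) :
    MergedRankLE T (insert j S) (d * N) := by
  obtain ⟨v, F, hF, hTF⟩ := hT
  let e := (finProdFinEquiv (m := d) (n := N)).symm
  refine ⟨fun q => update (v (e q).2) j (u (e q).1),
    fun q x => f (e q).1 (fun a => F (e q).2 (update x j a)), fun q x y hxy => ?_, fun x => ?_⟩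
  · refine congrArg (f (e q).1) (funext fun a => hF _ fun i hi => ?_)
    by_cases hij : i = j
    · subst hij; simp
    · simpa [hij] using hxy i (by simpa [hij] using hi)
  · have hprod : ∀ s p, ∏ i ∈ insert j S, update (v p) j (u s) i (x i)
        = u s (x j) * ∏ i ∈ S, v p i (x i) := fun s p => by
      rw [Finset.prod_insert hj, update_self]
      congr 1
      exact Finset.prod_congr rfl fun i hi => by rw [update_of_ne (ne_of_mem_of_not_mem hi hj)]
    have hslice : ∀ a, T (update x j a) = ∑ p, (∏ i ∈ S, v p i (x i)) * F p (update x j a) :=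
      fun a => by
        rw [hTF]
        refine Finset.sum_congr rfl fun p _ => congrArg (· * _) ?_
        exact Finset.prod_congr rfl fun i hi => by rw [update_of_ne (ne_of_mem_of_not_mem hi hj)]
    have hlin : ∀ s, f s (fun a => T (update x j a))
        = ∑ p, (∏ i ∈ S, v p i (x i)) * f s (fun a => F p (update x j a)) := fun s => by
      have hfibre : (fun a => T (update x j a))
          = ∑ p, (∏ i ∈ S, v p i (x i)) • fun a => F p (update x j a) := by
        ext a; simp [hslice]
      simp [hfibre]
    rw [hfix x, ← e.symm.sum_comp]
    simp only [Equiv.apply_symm_apply, Fintype.sum_prod_type, hprod, hlin, Finset.mul_sum]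
    exact Finset.sum_congr rfl fun _ _ => Finset.sum_congr rfl fun _ _ => by ring

theorem mergedRankLE_prod [DecidableEq ι] (T : (∀ i, α i) → R) {d : ι → ℕ}
    (u : ∀ i, Fin (d i) → α i → R) (f : ∀ i, Fin (d i) → Dual R (α i → R)) (S : Finset ι)
    (hfix : ∀ i ∈ S, ∀ x, T x = ∑ s, u i s (x i) * f i s (fun a => T (update x i a))) :
    MergedRankLE T S (∏ i ∈ S, d i) := by
  induction S using Finset.induction_on with
  | empty => simpa using mergedRankLE_empty T
  | insert j S hj ih =>
    rw [Finset.prod_insert hj]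
    exact (ih fun i hi => hfix i (Finset.mem_insert_of_mem hi)).split_off hj (u j) (f j)
      (hfix j (Finset.mem_insert_self j S))

theorem MergedRankLE.exists_sum_prod [Fintype ι] [DecidableEq ι] {T : (∀ i, α i) → R} {j : ι}
    {N : ℕ} (hT : MergedRankLE T (Finset.univ.erase j) N) :
    ∃ v : Fin N → ∀ i, α i → R, ∀ x, T x = ∑ p, ∏ i, v p i (x i) := by
  obtain ⟨v, F, hF, hTF⟩ := hT
  have hfac : ∀ p, FactorsThrough (F p) (fun x => x j) := fun p x y hxy =>
    hF p fun i hi => by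
      obtain rfl : i = j := by simpa using hi
      exact hxy
  refine ⟨fun p => update (v p) j (extend (fun x => x j) (F p) 0), fun x => ?_⟩
  rw [hTF]
  refine Finset.sum_congr rfl fun p _ => ?_
  rw [← Finset.prod_erase_mul _ _ (Finset.mem_univ j)]
  dsimp only
  rw [update_self, (hfac p).extend_apply]
  exact congrArg (· * _) (Finset.prod_congr rfl fun i hi => by
    rw [update_of_ne (Finset.ne_of_mem_erase hi)])

end MergedRank

theorem flattenSingle_col {𝔽 : Type*} {k : ℕ} {m : Fin k → ℕ} (T : (∀ i, Fin (m i)) → 𝔽)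
    (i : Fin k) (x : ∀ i, Fin (m i)) :
    (flattenSingle T i).col (fun j => x j.1) = fun a => T (update x i a) := by
  funext a
  refine congrArg T (funext fun j => ?_)
  by_cases h : j = i
  · subst h; simp
  · simp [h]

theorem exists_mode_expansion_of_rank_flattenSingle_eq {𝔽 : Type*} [Field 𝔽] {k : ℕ}
    {m : Fin k → ℕ} (T : (∀ i, Fin (m i)) → 𝔽) (i : Fin k) {d : ℕ}
    (hd : (flattenSingle T i).rank = d) :
    ∃ (u : Fin d → Fin (m i) → 𝔽) (f : Fin d → Dual 𝔽 (Fin (m i) → 𝔽)),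
      ∀ x, T x = ∑ s, u s (x i) * f s (fun a => T (update x i a)) := by
  obtain ⟨u, f, hU⟩ :=
    (Submodule.span 𝔽 (Set.range (flattenSingle T i).col)).exists_sum_dual_smul_eq
      ((Matrix.rank_eq_finrank_span_cols _).symm.trans hd)
  refine ⟨u, f, fun x => ?_⟩
  have hfiber := congrFun (hU _ (Submodule.subset_span ⟨_, flattenSingle_col T i x⟩)) (x i)
  simp only [Finset.sum_apply, Pi.smul_apply, smul_eq_mul, update_eq_self] at hfiber
  simp only [← hfiber, mul_comm]

/-- If `d i` is the rank of the 2-flattening of `T` corresponding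
to the partition `({i}, [k] \ {i})`, then `T` can be written as a sum of
`d₁ ⋯ d_{k-1}` pure tensors (the product over all indices but the last one). -/
theorem stmt_1 (𝔽 : Type*) [Field 𝔽] (k : ℕ) (hk : 1 ≤ k)
    (m : Fin k → ℕ)
    (T : (∀ i, Fin (m i)) → 𝔽) (d : Fin k → ℕ)
    (hd : ∀ i, (flattenSingle T i).rank = d i) :
    ∃ v : Fin (∏ i ∈ Finset.univ.erase (⟨k - 1, by omega⟩ : Fin k), d i) →
        ∀ i, Fin (m i) → 𝔽,
      ∀ x, T x = ∑ p, ∏ i, v p i (x i) := by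
  choose u f hfix using fun i => exists_mode_expansion_of_rank_flattenSingle_eq T i (hd i)
  exact (mergedRankLE_prod T u f _ fun i _ => hfix i).exists_sum_prod
end

section
/- Let 𝔽 be a field, let k ≥ 1, let m₁,…,m_k be positive integers, and let T : [m₁] × ⋯ × [m_k] → 𝔽 be a k-tensor. Let 𝒞 be a separating collection of partitions of [k] into two nonempty parts, and let d_max be a common upper bound on the matrix ranks of the 2-flattenings flat_{I,J} T over all partitions {I,J} ∈ 𝒞. Then T has tensor rank at most d_max^{2(k−1)}. -/
/-- The 2-flattening `flat_{I, [k] \ I} T` of a `k`-tensor `T`: rows are indexed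
by the partial indices in `I`, columns by the partial indices outside `I`, and
the entry at a pair of partial indices is `T` evaluated at the combined index. -/
def flattenAt {𝔽 : Type*} {k : ℕ} {m : Fin k → ℕ}
    (T : (∀ i, Fin (m i)) → 𝔽) (I : Finset (Fin k)) :
    Matrix ((i : {i : Fin k // i ∈ I}) → Fin (m i.1))
      ((j : {j : Fin k // j ∉ I}) → Fin (m j.1)) 𝔽 :=
  Matrix.of fun a b => T fun i => if h : i ∈ I then a ⟨i, h⟩ else b ⟨i, h⟩

/-!
Fix the coordinates outside a block `S` to a background point `b` and split `S` along a
separating cut `J` into `A = S ∩ J` and `B = S \ J`. The matrix `M x y` obtained by taking the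
`A`-coordinates from `x` and the `B`-coordinates from `y` is a submatrix of a flattening, so it
has rank `r ≤ d`. By the skeleton decomposition `M = C W⁻¹ R`, where `C` and `R` are `r` columns
and `r` rows of `M` and `W` is the `r × r` minor at their crossing, the diagonal `x ↦ M x x` is
a combination of `r²` products of a slice of `T` on `A` with a slice of `T` on `B`. By induction
on `|S|` this uses `d² · d^(2(|A|-1)) · d^(2(|B|-1)) = d^(2(|S|-1))` pure tensors.
-/

namespace Matrix

variable {α β K : Type*} [Field K] [Fintype α] [Fintype β]

theorem exists_linearIndependent_cols_span_eq (M : Matrix α β K) {r : ℕ} (hr : M.rank = r) :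
    ∃ c : Fin r → β, LinearIndependent K (fun p => M.col (c p)) ∧
      Submodule.span K (Set.range fun p => M.col (c p)) = Submodule.span K (Set.range M.col) := by
  obtain ⟨κ, c, -, hspan, hli⟩ := exists_linearIndependent' K M.col
  have := hli.finite
  have := Fintype.ofFinite κ
  have hcard : Fintype.card κ = r := by
    rw [linearIndependent_iff_card_eq_finrank_span.mp hli, Set.finrank, hspan,
      ← rank_eq_finrank_span_cols, hr]
  let e := (Fintype.equivFinOfCardEq hcard).symm
  refine ⟨c ∘ e, hli.comp e e.injective, ?_⟩
  rw [← hspan, ← e.surjective.range_comp]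
  rfl

theorem exists_eq_submatrix_mul_inv_mul (M : Matrix α β K) :
    ∃ (a : Fin M.rank → α) (c : Fin M.rank → β),
      M = M.submatrix id c * (M.submatrix a c)⁻¹ * M.submatrix a id := by
  obtain ⟨c, hli, hspan⟩ := M.exists_linearIndependent_cols_span_eq rfl
  set C := M.submatrix id c
  have hcols : ∀ y, M.col y ∈ LinearMap.range C.mulVecLin := fun y => by
    rw [range_mulVecLin]
    exact hspan ▸ Submodule.subset_span ⟨y, rfl⟩
  choose E hE using hcols
  have hME : M = C * Matrix.of fun p y => E y p := by
    ext x y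
    exact (congrFun (hE y) x).symm
  have hCrank : Cᵀ.rank = M.rank := by
    simpa using LinearIndependent.rank_matrix (M := Cᵀ) hli
  obtain ⟨a, hlia, -⟩ := Cᵀ.exists_linearIndependent_cols_span_eq hCrank
  have hdet : IsUnit (M.submatrix a c).det :=
    (isUnit_iff_isUnit_det _).mp (linearIndependent_rows_iff_isUnit.mp hlia)
  have hrows : M.submatrix a id = M.submatrix a c * Matrix.of fun p y => E y p := by
    ext q y
    exact congrFun (congrFun hME (a q)) y
  refine ⟨a, c, ?_⟩
  rw [Matrix.mul_assoc, hrows, nonsing_inv_mul_cancel_left _ _ hdet]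
  exact hME

end Matrix

namespace Finset

variable {ι : Type*} [DecidableEq ι] {α : ι → Type*}

theorem piecewise_piecewise_eq_inter (J S : Finset ι) (x y b : ∀ i, α i) :
    J.piecewise (S.piecewise x b) (S.piecewise y b) = (S ∩ J).piecewise x (S.piecewise y b) := by
  ext i
  by_cases hS : i ∈ S <;> by_cases hJ : i ∈ J <;> simp [hS, hJ]

theorem piecewise_piecewise_eq_sdiff (J S : Finset ι) (x y b : ∀ i, α i) :
    J.piecewise (S.piecewise y b) (S.piecewise x b) = (S \ J).piecewise x (S.piecewise y b) := by
  ext i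
  by_cases hS : i ∈ S <;> by_cases hJ : i ∈ J <;> simp [hS, hJ]

end Finset

section PureTensors

variable {ι R : Type*} {α : ι → Type*}

section Algebra

variable [CommSemiring R]

def IsSumOfPure (S : Finset ι) (n : ℕ) (F : (∀ i, α i) → R) : Prop :=
  ∃ v : Fin n → ∀ i, α i → R, ∀ x, F x = ∑ p, ∏ i ∈ S, v p i (x i)

variable {S A B : Finset ι} {n n' : ℕ} {F G : (∀ i, α i) → R}

theorem IsSumOfPure.of_card_eq {κ : Type*} [Fintype κ] (hn : Fintype.card κ = n)
    (v : κ → ∀ i, α i → R) (hF : ∀ x, F x = ∑ p, ∏ i ∈ S, v p i (x i)) :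
    IsSumOfPure S n F :=
  ⟨fun p => v ((Fintype.equivFinOfCardEq hn).symm p), fun x =>
    (hF x).trans (Fintype.sum_equiv (Fintype.equivFinOfCardEq hn) _ _ (by simp))⟩

theorem isSumOfPure_singleton [DecidableEq ι] (i : ι) (f : α i → R) :
    IsSumOfPure {i} 1 (fun x => f (x i)) :=
  ⟨fun _ => Function.update (fun _ _ => 1) i f, fun x => by simp⟩

theorem IsSumOfPure.mono (hS : S.Nonempty) (hn : n ≤ n') (hF : IsSumOfPure S n F) :
    IsSumOfPure S n' F := by
  obtain ⟨v, hv⟩ := hF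
  refine .of_card_eq (κ := Fin n ⊕ Fin (n' - n)) (by simp [hn]) (Sum.elim v 0) fun x => ?_
  simp [hv x, Fintype.sum_sum_type, zero_pow (Finset.card_ne_zero.mpr hS)]

theorem IsSumOfPure.mul [DecidableEq ι] (hAB : Disjoint A B) (hF : IsSumOfPure A n F)
    (hG : IsSumOfPure B n' G) : IsSumOfPure (A ∪ B) (n * n') (fun x => F x * G x) := by
  obtain ⟨v, hv⟩ := hF
  obtain ⟨w, hw⟩ := hG
  refine .of_card_eq (κ := Fin n × Fin n') (by simp)
    (fun pq i => if i ∈ A then v pq.1 i else w pq.2 i) fun x => ?_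
  rw [hv, hw, Finset.sum_mul_sum, ← Finset.univ_product_univ, Finset.sum_product]
  refine Finset.sum_congr rfl fun p _ => Finset.sum_congr rfl fun q _ => ?_
  rw [Finset.prod_union hAB]
  congr 1
  · exact Finset.prod_congr rfl fun i hi => by simp [hi]
  · exact Finset.prod_congr rfl fun i hi => by simp [Finset.disjoint_right.mp hAB hi]

theorem IsSumOfPure.const_mul [DecidableEq ι] (hS : S.Nonempty) (c : R)
    (hF : IsSumOfPure S n F) : IsSumOfPure S n (fun x => c * F x) := by
  obtain ⟨i₀, hi₀⟩ := hS
  obtain ⟨v, hv⟩ := hF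
  refine ⟨fun p i => (if i = i₀ then c else 1) • v p i, fun x => ?_⟩
  simp only [hv x, Finset.mul_sum]
  refine Finset.sum_congr rfl fun p _ => ?_
  simp only [Pi.smul_apply, smul_eq_mul, Finset.prod_mul_distrib, Finset.prod_ite_eq', if_pos hi₀]

theorem IsSumOfPure.sum {κ : Type*} [Fintype κ] {f : κ → (∀ i, α i) → R}
    (hf : ∀ p, IsSumOfPure S n (f p)) :
    IsSumOfPure S (Fintype.card κ * n) (fun x => ∑ p, f p x) := by
  choose v hv using hf
  refine .of_card_eq (κ := κ × Fin n) (by simp) (fun pq => v pq.1 pq.2) fun x => ?_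
  simp [hv, Fintype.sum_prod_type]

end Algebra

def flattenPiecewise [DecidableEq ι] (T : (∀ i, α i) → R) (J : Finset ι) :
    Matrix (∀ i, α i) (∀ i, α i) R :=
  Matrix.of fun x y => T (J.piecewise x y)

def IsSeparating (𝒞 : Finset (Finset ι)) : Prop :=
  ∀ i j : ι, i ≠ j → ∃ I ∈ 𝒞, (i ∈ I ∧ j ∉ I) ∨ (j ∈ I ∧ i ∉ I)

section Splitting

variable [Fintype ι] [DecidableEq ι] [∀ i, Fintype (α i)] {K : Type*} [Field K]

theorem IsSumOfPure.of_rank_flattenPiecewise_le {T : (∀ i, α i) → K} {J S : Finset ι}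
    {d nA nB : ℕ} (hJ : (flattenPiecewise T J).rank ≤ d) (hS : S.Nonempty)
    (hA : ∀ b, IsSumOfPure (S ∩ J) nA fun x => T ((S ∩ J).piecewise x b))
    (hB : ∀ b, IsSumOfPure (S \ J) nB fun x => T ((S \ J).piecewise x b)) (b : ∀ i, α i) :
    IsSumOfPure S (d * (d * (nA * nB))) fun x => T (S.piecewise x b) := by
  set M := (flattenPiecewise T J).submatrix (S.piecewise · b) (S.piecewise · b)
  obtain ⟨a, c, hM⟩ := M.exists_eq_submatrix_mul_inv_mul
  set W := (M.submatrix a c)⁻¹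
  have hT : ∀ x, T (S.piecewise x b) = ∑ q, ∑ p, W p q * (M (a q) x * M x (c p)) := fun x => by
    have hx : M x x = T (S.piecewise x b) := congrArg T (Finset.piecewise_same _ _)
    rw [← hx, congrFun (congrFun hM x) x]
    simp only [Matrix.mul_apply, Finset.sum_mul]
    exact Finset.sum_congr rfl fun q _ => Finset.sum_congr rfl fun p _ => by
      simp only [Matrix.submatrix_apply, id]
      ring
  have hcol : ∀ p x, M x (c p) = T ((S ∩ J).piecewise x (S.piecewise (c p) b)) := fun p x =>
    congrArg T (Finset.piecewise_piecewise_eq_inter J S x (c p) b)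
  have hrow : ∀ q x, M (a q) x = T ((S \ J).piecewise x (S.piecewise (a q) b)) := fun q x =>
    congrArg T (Finset.piecewise_piecewise_eq_sdiff J S x (a q) b)
  have hterm : ∀ p q, IsSumOfPure S (nB * nA) fun x => W p q * (M (a q) x * M x (c p)) := by
    intro p q
    simp only [hcol, hrow]
    have h := (hB (S.piecewise (a q) b)).mul (Finset.disjoint_sdiff_inter S J)
      (hA (S.piecewise (c p) b))
    rw [Finset.sdiff_union_inter] at h
    exact h.const_mul hS _
  have hrank : M.rank ≤ d := (Matrix.rank_submatrix_le _ _ _).trans hJ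
  have := IsSumOfPure.sum fun q => IsSumOfPure.sum fun p => hterm p q
  simp only [Fintype.card_fin, ← hT] at this
  exact this.mono hS (by rw [mul_comm nB]; gcongr)

theorem isSumOfPure_piecewise_of_separating {T : (∀ i, α i) → K} {𝒞 : Finset (Finset ι)}
    (hsep : IsSeparating 𝒞) {d : ℕ}
    (hd : ∀ I ∈ 𝒞, (flattenPiecewise T I).rank ≤ d) (S : Finset ι) (hS : S.Nonempty)
    (b : ∀ i, α i) :
    IsSumOfPure S (d ^ (2 * (S.card - 1))) fun x => T (S.piecewise x b) := by
  induction S using Finset.strongInduction generalizing b with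
  | H S ih =>
    obtain ⟨i, rfl⟩ | ⟨i, hi, j, hj, hij⟩ := hS.exists_eq_singleton_or_nontrivial
    · simpa [Finset.piecewise_singleton] using
        isSumOfPure_singleton i fun t => T (Function.update b i t)
    obtain ⟨J, hJ, hsepJ⟩ := hsep i j hij
    have hne : (S ∩ J).Nonempty ∧ (S \ J).Nonempty := by
      rcases hsepJ with ⟨h₁, h₂⟩ | ⟨h₁, h₂⟩
      · exact ⟨⟨i, Finset.mem_inter.2 ⟨hi, h₁⟩⟩, ⟨j, Finset.mem_sdiff.2 ⟨hj, h₂⟩⟩⟩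
      · exact ⟨⟨j, Finset.mem_inter.2 ⟨hj, h₁⟩⟩, ⟨i, Finset.mem_sdiff.2 ⟨hi, h₂⟩⟩⟩
    have hA := ih _ (Finset.sdiff_sdiff_self_left S J ▸
      Finset.sdiff_ssubset Finset.sdiff_subset hne.2) hne.1
    have hB := ih _ (Finset.sdiff_inter_self_left S J ▸
      Finset.sdiff_ssubset Finset.inter_subset_left hne.1) hne.2
    have hcard := Finset.card_inter_add_card_sdiff S J
    have hA₁ := hne.1.card_pos
    have hB₁ := hne.2.card_pos
    rw [show 2 * (S.card - 1) = 1 + (1 + (2 * ((S ∩ J).card - 1) + 2 * ((S \ J).card - 1))) by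
      omega, pow_add, pow_add, pow_add, pow_one]
    exact IsSumOfPure.of_rank_flattenPiecewise_le (hd J hJ) hS hA hB b

theorem isSumOfPure_univ_of_separating [Nonempty ι] {T : (∀ i, α i) → K}
    {𝒞 : Finset (Finset ι)} (hsep : IsSeparating 𝒞) {d : ℕ}
    (hd : ∀ I ∈ 𝒞, (flattenPiecewise T I).rank ≤ d) :
    IsSumOfPure Finset.univ (d ^ (2 * (Fintype.card ι - 1))) T := by
  rcases isEmpty_or_nonempty (∀ i, α i) with h | ⟨⟨b⟩⟩
  · exact ⟨0, fun x => isEmptyElim x⟩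
  · simpa using isSumOfPure_piecewise_of_separating hsep hd _ Finset.univ_nonempty b

end Splitting

end PureTensors

theorem rank_flattenPiecewise_le {𝔽 : Type*} [Field 𝔽] {k : ℕ} {m : Fin k → ℕ}
    (T : (∀ i, Fin (m i)) → 𝔽) (I : Finset (Fin k)) :
    (flattenPiecewise T I).rank ≤ (flattenAt T I).rank := by
  have h : flattenPiecewise T I =
      (flattenAt T I).submatrix (fun x i => x i.1) (fun y j => y j.1) := by
    ext x y
    rfl
  exact h ▸ Matrix.rank_submatrix_le _ _ _

theorem stmt_2_general (𝔽 : Type*) [Field 𝔽] (k : ℕ) (hk : 1 ≤ k)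
    (m : Fin k → ℕ)
    (T : (∀ i, Fin (m i)) → 𝔽)
    (𝒞 : Finset (Finset (Fin k)))
    (hsep : ∀ i j : Fin k, i ≠ j →
      ∃ I ∈ 𝒞, (i ∈ I ∧ j ∉ I) ∨ (j ∈ I ∧ i ∉ I))
    (dmax : ℕ)
    (hd : ∀ I ∈ 𝒞, (flattenAt T I).rank ≤ dmax) :
    ∃ v : Fin (dmax ^ (2 * (k - 1))) → ∀ i, Fin (m i) → 𝔽,
      ∀ x, T x = ∑ p, ∏ i, v p i (x i) := by
  have : Nonempty (Fin k) := ⟨⟨0, hk⟩⟩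
  have h := isSumOfPure_univ_of_separating hsep
    fun I hI => (rank_flattenPiecewise_le T I).trans (hd I hI)
  rw [Fintype.card_fin] at h
  simpa [IsSumOfPure] using h

/-- If `𝒞` is a separating collection of partitions of `[k]` into
two nonempty parts (each partition represented by `I` and its complement), and the
rank of each 2-flattening `flat_{I, Iᶜ} T` for `I ∈ 𝒞` is at most `dmax`, then `T`
can be written as a sum of `dmax ^ (2(k-1))` pure tensors. -/
theorem stmt_2 (𝔽 : Type*) [Field 𝔽] (k : ℕ) (hk : 1 ≤ k)
    (m : Fin k → ℕ) (hm : ∀ i, 0 < m i)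
    (T : (∀ i, Fin (m i)) → 𝔽)
    (𝒞 : Finset (Finset (Fin k)))
    (hparts : ∀ I ∈ 𝒞, I.Nonempty ∧ Iᶜ.Nonempty)
    (hsep : ∀ i j : Fin k, i ≠ j →
      ∃ I ∈ 𝒞, (i ∈ I ∧ j ∉ I) ∨ (j ∈ I ∧ i ∉ I))
    (dmax : ℕ)
    (hd : ∀ I ∈ 𝒞, (flattenAt T I).rank ≤ dmax) :
    ∃ v : Fin (dmax ^ (2 * (k - 1))) → ∀ i, Fin (m i) → 𝔽,
      ∀ x, T x = ∑ p, ∏ i, v p i (x i) :=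
  stmt_2_general 𝔽 k hk m T 𝒞 hsep dmax hd
end

section
/- For every integer m ≥ 1, the number of Latin squares of dimension m is at least ∏_{j=0}^{m} j!. Moreover, for every m ≥ 3, this product is strictly greater than 2^{m²/4}, so the number of Latin squares of dimension m exceeds 2^{m²/4}. -/
open Finset

variable {α : Type} [Fintype α] [DecidableEq α]

def SDRs {ι : Type} [Fintype ι] [DecidableEq ι] (S : ι → Finset α) : Finset (ι → α) :=
  Finset.univ.filter (fun f => Function.Injective f ∧ ∀ i, f i ∈ S i)

theorem mem_SDRs {ι : Type} [Fintype ι] [DecidableEq ι] {S : ι → Finset α} {f : ι → α} :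
    f ∈ SDRs S ↔ Function.Injective f ∧ ∀ i, f i ∈ S i := by
  simp [SDRs]

theorem SDRs_nonempty {ι : Type} [Fintype ι] [DecidableEq ι] (S : ι → Finset α)
    (hall : ∀ I : Finset ι, I.card ≤ (I.biUnion S).card) : (SDRs S).Nonempty := by
  obtain ⟨f, hf1, hf2⟩ := (Finset.all_card_le_biUnion_card_iff_exists_injective S).mp hall
  exact ⟨f, mem_SDRs.mpr ⟨hf1, hf2⟩⟩

/-- **M. Hall's theorem**: a family of `n` finite sets satisfying Hall's condition, each of
size at least `t` (with `t ≤ n`), has at least `t!` systems of distinct representatives. -/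
theorem hall_count (n : ℕ) : ∀ {ι : Type} [Fintype ι] [DecidableEq ι]
    (S : ι → Finset α) (t : ℕ), Fintype.card ι ≤ n → t ≤ Fintype.card ι →
    (∀ i, t ≤ (S i).card) → (∀ I : Finset ι, I.card ≤ (I.biUnion S).card) →
    t.factorial ≤ (SDRs S).card := by
  induction n with
  | zero =>
    intro ι _ _ S t hn ht hS hall
    have ht0 : t = 0 := by omega
    subst ht0
    simpa using Finset.card_pos.mpr (SDRs_nonempty S hall)
  | succ n IH =>
    intro ι _ _ S t hn ht hS hall
    rcases Nat.eq_zero_or_pos t with rfl | htpos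
    · simpa using Finset.card_pos.mpr (SDRs_nonempty S hall)
    by_cases hcrit : ∃ I : Finset ι, I.Nonempty ∧ I ≠ Finset.univ ∧ (I.biUnion S).card ≤ I.card
    · -- critical case
      obtain ⟨I, hIne, hIu, hIcard⟩ := hcrit
      have hUcard : (I.biUnion S).card = I.card := le_antisymm hIcard (hall I)
      set U := I.biUnion S with hU
      -- the family restricted to I
      set ι' := {i : ι // i ∈ I}
      set S' : ι' → Finset α := fun i => S i.1 with hS'
      have hcardι' : Fintype.card ι' = I.card := Fintype.card_coe I
      have hIlt : I.card < Fintype.card ι := by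
        have : I ⊂ Finset.univ := lt_of_le_of_ne (Finset.subset_univ I) hIu
        simpa [Finset.card_univ] using Finset.card_lt_card this
      have htI : t ≤ I.card := by
        obtain ⟨i, hi⟩ := hIne
        calc t ≤ (S i).card := hS i
          _ ≤ U.card := Finset.card_le_card (Finset.subset_biUnion_of_mem S hi)
          _ = I.card := hUcard
      have hall' : ∀ J : Finset ι', J.card ≤ (J.biUnion S').card := by
        intro J
        have himage : (J.image Subtype.val).biUnion S = J.biUnion S' := by
          ext a
          simp only [Finset.mem_biUnion, Finset.mem_image, hS']
          constructor
          · rintro ⟨b, ⟨i, hi, rfl⟩, hab⟩; exact ⟨i, hi, hab⟩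
          · rintro ⟨i, hi, hab⟩; exact ⟨i.1, ⟨i, hi, rfl⟩, hab⟩
        have := hall (J.image Subtype.val)
        rwa [Finset.card_image_of_injective _ Subtype.val_injective, himage] at this
      have hsdr' : t.factorial ≤ (SDRs S').card := by
        refine IH S' t ?_ ?_ (fun i => hS i.1) hall'
        · omega
        · omega
      -- extension to the complement via Hall existence
      set ι'' := {i : ι // i ∉ I}
      set S'' : ι'' → Finset α := fun i => S i.1 \ U with hS''
      have hall'' : ∀ J : Finset ι'', J.card ≤ (J.biUnion S'').card := by
        intro J
        set J' := J.image Subtype.val with hJ'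
        have hJcard : J'.card = J.card := Finset.card_image_of_injective _ Subtype.val_injective
        have hdisj : Disjoint J' I := by
          rw [Finset.disjoint_left]
          rintro a ha haI
          rw [hJ'] at ha
          obtain ⟨b, _, rfl⟩ := Finset.mem_image.mp ha
          exact b.2 haI
        have heq : J.biUnion S'' = (J'.biUnion S) \ U := by
          ext a
          simp only [Finset.mem_biUnion, Finset.mem_sdiff, hS'', hJ', Finset.mem_image]
          constructor
          · rintro ⟨i, hi, hai, haU⟩
            exact ⟨⟨i.1, ⟨i, hi, rfl⟩, hai⟩, haU⟩
          · rintro ⟨⟨x, ⟨i, hi, rfl⟩, hax⟩, haU⟩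
            exact ⟨i, hi, hax, haU⟩
        have hsub : U ⊆ (J'.biUnion S) ∪ U := Finset.subset_union_right
        have hunion : (J'.biUnion S) ∪ U = (J' ∪ I).biUnion S := by
          ext a
          simp only [Finset.mem_union, Finset.mem_biUnion, hU]
          constructor
          · rintro (⟨i, hi, hai⟩ | ⟨i, hi, hai⟩)
            · exact ⟨i, Or.inl hi, hai⟩
            · exact ⟨i, Or.inr hi, hai⟩
          · rintro ⟨i, hi | hi, hai⟩
            · exact Or.inl ⟨i, hi, hai⟩
            · exact Or.inr ⟨i, hi, hai⟩
        have hcard1 : J'.card + I.card ≤ ((J'.biUnion S) ∪ U).card := by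
          rw [hunion, ← Finset.card_union_of_disjoint hdisj]
          exact hall _
        have : (J'.biUnion S) \ U = ((J'.biUnion S) ∪ U) \ U := by
          ext a; simp; tauto
        rw [heq, this, Finset.card_sdiff_of_subset hsub]
        omega
      obtain ⟨h, hinj, hmem⟩ :=
        (Finset.all_card_le_biUnion_card_iff_exists_injective S'').mp hall''
      -- combine
      set Φ : (ι' → α) → (ι → α) :=
        fun g i => if hi : i ∈ I then g ⟨i, hi⟩ else h ⟨i, hi⟩ with hΦ
      have hΦinj : Function.Injective Φ := by
        intro g g' hgg'
        funext i
        have := congrFun hgg' i.1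
        simpa [hΦ, i.2] using this
      have hΦmem : ∀ g ∈ SDRs S', Φ g ∈ SDRs S := by
        intro g hg
        rw [mem_SDRs] at hg ⊢
        obtain ⟨hginj, hgmem⟩ := hg
        have hgU : ∀ (i : ι) (hi : i ∈ I), Φ g i ∈ U := by
          intro i hi
          have : Φ g i ∈ S i := by simpa [hΦ, hi] using hgmem ⟨i, hi⟩
          exact Finset.mem_biUnion.mpr ⟨i, hi, this⟩
        have hhU : ∀ (i : ι) (hi : i ∉ I), Φ g i ∉ U := by
          intro i hi
          have := hmem ⟨i, hi⟩
          rw [hS''] at this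
          simp only [hΦ, dif_neg hi]
          exact (Finset.mem_sdiff.mp this).2
        constructor
        · intro a b hab
          by_cases ha : a ∈ I <;> by_cases hb : b ∈ I
          · have : g ⟨a, ha⟩ = g ⟨b, hb⟩ := by simpa [hΦ, ha, hb] using hab
            simpa using congrArg Subtype.val (hginj this)
          · exact absurd (hab ▸ hgU a ha) (hhU b hb)
          · exact absurd ((hab.symm) ▸ hgU b hb) (hhU a ha)
          · have : h ⟨a, ha⟩ = h ⟨b, hb⟩ := by simpa [hΦ, ha, hb] using hab
            simpa using congrArg Subtype.val (hinj this)
        · intro i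
          by_cases hi : i ∈ I
          · simpa [hΦ, hi] using hgmem ⟨i, hi⟩
          · have := hmem ⟨i, hi⟩
            rw [hS''] at this
            simpa [hΦ, hi] using (Finset.mem_sdiff.mp this).1
      calc t.factorial ≤ (SDRs S').card := hsdr'
        _ = ((SDRs S').image Φ).card := (Finset.card_image_of_injective _ hΦinj).symm
        _ ≤ (SDRs S).card := Finset.card_le_card (by
            intro f hf
            obtain ⟨g, hg, rfl⟩ := Finset.mem_image.mp hf
            exact hΦmem g hg)
    · -- no critical set
      push_neg at hcrit
      have hιpos : 0 < Fintype.card ι := lt_of_lt_of_le htpos ht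
      have : Nonempty ι := Fintype.card_pos_iff.mp hιpos
      obtain ⟨i₀⟩ := this
      set ι' := {i : ι // i ≠ i₀}
      have hcardι' : Fintype.card ι' = Fintype.card ι - 1 := by
        have h1 : Fintype.card {i : ι // i = i₀} = 1 := Fintype.card_subtype_eq i₀
        have := Fintype.card_subtype_compl (fun i : ι => i = i₀)
        rw [h1] at this
        exact this
      set Sx : α → ι' → Finset α := fun x i => S i.1 \ {x} with hSx
      have hsdrx : ∀ x ∈ S i₀, (t - 1).factorial ≤ (SDRs (Sx x)).card := by
        intro x hx
        refine IH (Sx x) (t - 1) (by omega) (by omega) ?_ ?_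
        · intro i
          have := Finset.card_le_card_sdiff_add_card (s := S i.1) (t := {x})
          have hsi := hS i.1
          simp only [Finset.card_singleton] at this
          simp only [hSx]
          omega
        · intro J
          rcases Finset.eq_empty_or_nonempty J with rfl | hJne
          · simp
          set J' := J.image Subtype.val with hJ'
          have hJcard : J'.card = J.card := Finset.card_image_of_injective _ Subtype.val_injective
          have hJ'ne : J'.Nonempty := hJne.image _
          have hJ'u : J' ≠ Finset.univ := by
            intro hcon
            have : i₀ ∈ J' := hcon ▸ Finset.mem_univ i₀
            obtain ⟨b, _, hb⟩ := Finset.mem_image.mp this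
            exact b.2 hb
          have hstrict : J'.card < (J'.biUnion S).card := hcrit J' hJ'ne hJ'u
          have heq : J.biUnion (Sx x) = (J'.biUnion S) \ {x} := by
            ext a
            simp only [Finset.mem_biUnion, Finset.mem_sdiff, hSx, hJ', Finset.mem_image,
              Finset.mem_singleton]
            constructor
            · rintro ⟨i, hi, hai, hax⟩
              exact ⟨⟨i.1, ⟨i, hi, rfl⟩, hai⟩, hax⟩
            · rintro ⟨⟨y, ⟨i, hi, rfl⟩, hax⟩, hay⟩
              exact ⟨i, hi, hax, hay⟩
          have := Finset.card_le_card_sdiff_add_card (s := J'.biUnion S) (t := {x})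
          simp only [Finset.card_singleton] at this
          rw [heq]
          omega
      -- the extension map
      set ext : α → (ι' → α) → (ι → α) :=
        fun x g i => if hi : i = i₀ then x else g ⟨i, hi⟩ with hext
      have hextinj : ∀ x, Function.Injective (ext x) := by
        intro x g g' hgg'
        funext i
        have := congrFun hgg' i.1
        simpa [hext, i.2] using this
      have hextmem : ∀ x ∈ S i₀, ∀ g ∈ SDRs (Sx x), ext x g ∈ SDRs S := by
        intro x hx g hg
        rw [mem_SDRs] at hg ⊢
        obtain ⟨hginj, hgmem⟩ := hg
        have hgx : ∀ (i : ι) (hi : i ≠ i₀), ext x g i ≠ x := by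
          intro i hi
          have := hgmem ⟨i, hi⟩
          rw [hSx] at this
          simp only [hext, dif_neg hi]
          simpa using (Finset.mem_sdiff.mp this).2
        constructor
        · intro a b hab
          by_cases ha : a = i₀ <;> by_cases hb : b = i₀
          · rw [ha, hb]
          · exact absurd (by simpa [hext, ha] using hab.symm) (hgx b hb)
          · exact absurd (by simpa [hext, hb] using hab) (hgx a ha)
          · have : g ⟨a, ha⟩ = g ⟨b, hb⟩ := by simpa [hext, ha, hb] using hab
            simpa using congrArg Subtype.val (hginj this)
        · intro i
          by_cases hi : i = i₀
          · subst hi; simpa [hext] using hx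
          · have := hgmem ⟨i, hi⟩
            rw [hSx] at this
            simpa [hext, hi] using (Finset.mem_sdiff.mp this).1
      -- collect into a disjoint union
      have hsubset : (S i₀).biUnion (fun x => (SDRs (Sx x)).image (ext x)) ⊆ SDRs S := by
        intro f hf
        obtain ⟨x, hx, hf⟩ := Finset.mem_biUnion.mp hf
        obtain ⟨g, hg, rfl⟩ := Finset.mem_image.mp hf
        exact hextmem x hx g hg
      have hdisjoint : ∀ x ∈ S i₀, ∀ y ∈ S i₀, x ≠ y →
          Disjoint ((SDRs (Sx x)).image (ext x)) ((SDRs (Sx y)).image (ext y)) := by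
        intro x hx y hy hxy
        rw [Finset.disjoint_left]
        rintro f hf hf'
        obtain ⟨g, hg, rfl⟩ := Finset.mem_image.mp hf
        obtain ⟨g', hg', hgg'⟩ := Finset.mem_image.mp hf'
        have := congrFun hgg' i₀
        simp [hext] at this
        exact hxy this.symm
      have hcardbi : ((S i₀).biUnion (fun x => (SDRs (Sx x)).image (ext x))).card
          = ∑ x ∈ S i₀, ((SDRs (Sx x)).image (ext x)).card :=
        Finset.card_biUnion hdisjoint
      have hsum : (S i₀).card * (t-1).factorial ≤
          ∑ x ∈ S i₀, ((SDRs (Sx x)).image (ext x)).card := by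
        rw [← Finset.sum_const_nat (m := (t-1).factorial) (fun x _ => rfl)] at *
        · exact Finset.sum_le_sum (fun x hx => by
            rw [Finset.card_image_of_injective _ (hextinj x)]
            exact hsdrx x hx)
      calc t.factorial = t * (t-1).factorial := by
            rw [← Nat.succ_pred_eq_of_pos htpos, Nat.factorial_succ]; simp
        _ ≤ (S i₀).card * (t-1).factorial :=
            Nat.mul_le_mul_right _ (hS i₀)
        _ ≤ ∑ x ∈ S i₀, ((SDRs (Sx x)).image (ext x)).card := hsum
        _ = ((S i₀).biUnion (fun x => (SDRs (Sx x)).image (ext x))).card := hcardbi.symm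
        _ ≤ (SDRs S).card := Finset.card_le_card hsubset

/-- The finset of `k × m` Latin rectangles: each row is a permutation of `Fin m`, and each
column is injective. -/
def Rects (m k : ℕ) : Finset (Fin k → Fin m → Fin m) :=
  Finset.univ.filter
    (fun L => (∀ x, Function.Bijective (L x)) ∧ ∀ y, Function.Injective fun x => L x y)

theorem mem_Rects {m k : ℕ} {L : Fin k → Fin m → Fin m} :
    L ∈ Rects m k ↔ (∀ x, Function.Bijective (L x)) ∧ ∀ y, Function.Injective fun x => L x y := by
  simp [Rects]

/-- The available symbols for column `y` when extending a Latin rectangle by one row. -/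
def avail {m k : ℕ} (L : Fin k → Fin m → Fin m) (y : Fin m) : Finset (Fin m) :=
  Finset.univ \ (Finset.univ.image fun x => L x y)

theorem rect_count (m : ℕ) : ∀ k, k ≤ m →
    (∏ j ∈ Finset.range k, Nat.factorial (m - j)) ≤ (Rects m k).card := by
  intro k
  induction k with
  | zero =>
    intro _
    have huniv : Rects m 0 = Finset.univ := by
      apply Finset.filter_true_of_mem
      intro L _
      exact ⟨fun x => x.elim0, fun y a b _ => a.elim0⟩
    simp [huniv, Finset.card_univ]
  | succ k IHk =>
    intro hk1
    have hk : k ≤ m := by omega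
    have IH := IHk hk
    -- Hall data for a fixed rectangle L
    have key : ∀ L ∈ Rects m k, Nat.factorial (m - k) ≤ (SDRs (avail L)).card := by
      intro L hL
      rw [mem_Rects] at hL
      obtain ⟨hrow, hcol⟩ := hL
      have hScard : ∀ y, (avail L y).card = m - k := by
        intro y
        rw [avail, Finset.card_sdiff_of_subset (Finset.subset_univ _), Finset.card_univ,
          Finset.card_image_of_injective _ (hcol y), Finset.card_univ]
        simp
      have hfilter : ∀ s : Fin m,
          (Finset.univ.filter (fun y => s ∈ avail L y)).card = m - k := by
        intro s
        set c : Fin k → Fin m := fun x => (Equiv.ofBijective _ (hrow x)).symm s with hc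
        have hcs : ∀ x, L x (c x) = s := by
          intro x
          exact (Equiv.ofBijective _ (hrow x)).apply_symm_apply s
        have hcinj : Function.Injective c := by
          intro x x' hxx'
          apply hcol (c x)
          show L x (c x) = L x' (c x)
          rw [hcs x, hxx', hcs x']
        have himg : Finset.univ.filter (fun y => ∃ x, L x y = s) = Finset.univ.image c := by
          ext y
          simp only [Finset.mem_filter, Finset.mem_univ, true_and, Finset.mem_image]
          constructor
          · rintro ⟨x, hx⟩
            exact ⟨x, (hrow x).injective (by rw [hcs x, hx])⟩
          · rintro ⟨x, rfl⟩
            exact ⟨x, hcs x⟩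
        have hcard1 : (Finset.univ.filter (fun y => ∃ x, L x y = s)).card = k := by
          rw [himg, Finset.card_image_of_injective _ hcinj, Finset.card_univ]
          simp
        have hmem : ∀ y, s ∈ avail L y ↔ ¬ ∃ x, L x y = s := by
          intro y
          simp [avail]
        have := Finset.card_filter_add_card_filter_not
          (s := (Finset.univ : Finset (Fin m))) (p := fun y => ∃ x, L x y = s)
        rw [Finset.filter_congr (fun y _ => by rw [hmem y])]
        simp only [Finset.card_univ, Fintype.card_fin] at this ⊢
        omega
      -- Hall's condition by double counting
      have hall : ∀ Y : Finset (Fin m), Y.card ≤ (Y.biUnion (avail L)).card := by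
        intro Y
        set U := Y.biUnion (avail L) with hU
        have hmk : 0 < m - k := by omega
        have hsub : ∀ y ∈ Y, avail L y ⊆ U := fun y hy => Finset.subset_biUnion_of_mem _ hy
        have hcount : Y.card * (m - k) ≤ U.card * (m - k) := by
          calc Y.card * (m - k) = ∑ y ∈ Y, (avail L y).card := by
                rw [Finset.sum_congr rfl (fun y _ => hScard y), Finset.sum_const, smul_eq_mul]
            _ = ∑ y ∈ Y, ∑ s ∈ U, (if s ∈ avail L y then 1 else 0) := by
                refine Finset.sum_congr rfl (fun y hy => ?_)
                have hfe : U.filter (fun s => s ∈ avail L y) = avail L y := by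
                  ext s
                  simp only [Finset.mem_filter]
                  exact ⟨fun h => h.2, fun h => ⟨hsub y hy h, h⟩⟩
                calc (avail L y).card
                    = (U.filter (fun s => s ∈ avail L y)).card := by rw [hfe]
                  _ = ∑ s ∈ U, if s ∈ avail L y then 1 else 0 := by
                      rw [Finset.card_filter]
            _ = ∑ s ∈ U, ∑ y ∈ Y, (if s ∈ avail L y then 1 else 0) := Finset.sum_comm
            _ = ∑ s ∈ U, (Y.filter (fun y => s ∈ avail L y)).card := by
                refine Finset.sum_congr rfl (fun s _ => ?_)
                rw [Finset.card_filter]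
            _ ≤ ∑ s ∈ U, (m - k) := by
                refine Finset.sum_le_sum (fun s _ => ?_)
                rw [← hfilter s]
                exact Finset.card_le_card (Finset.filter_subset_filter _ (Finset.subset_univ Y))
            _ = U.card * (m - k) := by rw [Finset.sum_const, smul_eq_mul]
        exact Nat.le_of_mul_le_mul_right hcount hmk
      exact hall_count m (avail L) (m - k) (by simp) (by simp) (fun y => (hScard y).ge)
        hall
    -- the extension map is `Fin.snoc`
    have hsnocmem : ∀ L ∈ Rects m k, ∀ f ∈ SDRs (avail L),
        (Fin.snoc L f : Fin (k+1) → Fin m → Fin m) ∈ Rects m (k + 1) := by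
      intro L hL f hf
      rw [mem_Rects] at hL ⊢
      rw [mem_SDRs] at hf
      obtain ⟨hrow, hcol⟩ := hL
      obtain ⟨hfinj, hfmem⟩ := hf
      have hne : ∀ y (i : Fin k), f y ≠ L i y := by
        intro y i h
        have := hfmem y
        rw [avail, Finset.mem_sdiff] at this
        exact this.2 (Finset.mem_image.mpr ⟨i, Finset.mem_univ i, h.symm⟩)
      constructor
      · intro x
        refine Fin.lastCases ?_ ?_ x
        · rw [Fin.snoc_last]
          exact (Finite.injective_iff_bijective).mp hfinj
        · intro i
          rw [Fin.snoc_castSucc]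
          exact hrow i
      · intro y a b hab
        simp only at hab
        rcases Fin.eq_castSucc_or_eq_last a with ⟨i, rfl⟩ | rfl <;>
          rcases Fin.eq_castSucc_or_eq_last b with ⟨j, rfl⟩ | rfl
        · rw [Fin.snoc_castSucc, Fin.snoc_castSucc] at hab
          exact congrArg _ (hcol y hab)
        · rw [Fin.snoc_castSucc, Fin.snoc_last] at hab
          exact absurd hab.symm (hne y i)
        · rw [Fin.snoc_castSucc, Fin.snoc_last] at hab
          exact absurd hab (hne y j)
        · rfl
    have hsnocinj : ∀ L : Fin k → Fin m → Fin m,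
        Function.Injective (fun f : Fin m → Fin m => (Fin.snoc L f : Fin (k+1) → Fin m → Fin m)) := by
      intro L f f' hff'
      have := congrFun hff' (Fin.last k)
      simpa [Fin.snoc_last] using this
    have hdisj : ∀ L ∈ Rects m k, ∀ L' ∈ Rects m k, L ≠ L' →
        Disjoint ((SDRs (avail L)).image (fun f => (Fin.snoc L f : Fin (k+1) → Fin m → Fin m)))
          ((SDRs (avail L')).image (fun f => (Fin.snoc L' f : Fin (k+1) → Fin m → Fin m))) := by
      intro L _ L' _ hLL'
      rw [Finset.disjoint_left]
      rintro M hM hM'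
      obtain ⟨f, _, rfl⟩ := Finset.mem_image.mp hM
      obtain ⟨f', _, heq⟩ := Finset.mem_image.mp hM'
      apply hLL'
      have := congrArg Fin.init heq
      rw [Fin.init_snoc, Fin.init_snoc] at this
      exact this.symm
    have hsubset : (Rects m k).biUnion
        (fun L => (SDRs (avail L)).image (fun f => (Fin.snoc L f : Fin (k+1) → Fin m → Fin m)))
        ⊆ Rects m (k + 1) := by
      intro M hM
      obtain ⟨L, hL, hM⟩ := Finset.mem_biUnion.mp hM
      obtain ⟨f, hf, rfl⟩ := Finset.mem_image.mp hM
      exact hsnocmem L hL f hf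
    calc ∏ j ∈ Finset.range (k + 1), Nat.factorial (m - j)
        = (∏ j ∈ Finset.range k, Nat.factorial (m - j)) * Nat.factorial (m - k) := by
          rw [Finset.prod_range_succ]
      _ ≤ (Rects m k).card * Nat.factorial (m - k) := Nat.mul_le_mul_right _ IH
      _ = ∑ _L ∈ Rects m k, Nat.factorial (m - k) := by rw [Finset.sum_const, smul_eq_mul]
      _ ≤ ∑ L ∈ Rects m k,
            ((SDRs (avail L)).image
              (fun f => (Fin.snoc L f : Fin (k+1) → Fin m → Fin m))).card := by
          refine Finset.sum_le_sum (fun L hL => ?_)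
          rw [Finset.card_image_of_injective _ (hsnocinj L)]
          exact key L hL
      _ = ((Rects m k).biUnion
            (fun L => (SDRs (avail L)).image
              (fun f => (Fin.snoc L f : Fin (k+1) → Fin m → Fin m)))).card :=
          (Finset.card_biUnion hdisj).symm
      _ ≤ (Rects m (k + 1)).card := Finset.card_le_card hsubset

theorem two_pow_pred_le_factorial : ∀ j : ℕ, 2 ^ (j - 1) ≤ j.factorial
  | 0 => by simp
  | 1 => by simp
  | (j + 2) => by
      have h := two_pow_pred_le_factorial (j + 1)
      simp only [Nat.add_sub_cancel] at h ⊢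
      calc 2 ^ (j + 1) = 2 * 2 ^ j := by ring
        _ ≤ (j + 2) * (j + 1).factorial := Nat.mul_le_mul (by omega) h
        _ = (j + 2).factorial := (Nat.factorial_succ _).symm

/-- The number of Latin squares of dimension `m` is at least
`∏_{j=0}^{m} j!`; moreover, for `m ≥ 3` this product is strictly greater than
`2^{m²/4}`, so the number of Latin squares of dimension `m` exceeds `2^{m²/4}`. -/
theorem stmt_4 (m : ℕ) (hm : 1 ≤ m) :
    (∏ j ∈ Finset.range (m + 1), Nat.factorial j) ≤
      Nat.card {L : Fin m → Fin m → Fin m //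
        (∀ x, Function.Bijective (L x)) ∧ (∀ y, Function.Bijective fun x => L x y)} ∧
    (3 ≤ m →
      (2 : ℝ) ^ ((m : ℝ) ^ 2 / 4) <
        (∏ j ∈ Finset.range (m + 1), Nat.factorial j : ℕ) ∧
      (2 : ℝ) ^ ((m : ℝ) ^ 2 / 4) <
        (Nat.card {L : Fin m → Fin m → Fin m //
          (∀ x, Function.Bijective (L x)) ∧
          (∀ y, Function.Bijective fun x => L x y)} : ℝ)) := by
  classical
  have hcard : Nat.card {L : Fin m → Fin m → Fin m //
      (∀ x, Function.Bijective (L x)) ∧ (∀ y, Function.Bijective fun x => L x y)}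
      = (Rects m m).card := by
    rw [Nat.card_eq_fintype_card, Fintype.card_subtype, Rects]
    congr 1
    apply Finset.filter_congr
    intro L _
    refine and_congr_right (fun _ => forall_congr' fun y => ?_)
    exact ⟨fun h => h.injective, fun h => (Finite.injective_iff_bijective).mp h⟩
  have hprodeq : (∏ j ∈ Finset.range (m + 1), Nat.factorial j)
      = ∏ j ∈ Finset.range m, Nat.factorial (m - j) := by
    have h1 := Finset.prod_range_reflect (fun j => Nat.factorial j) (m + 1)
    simp only [Nat.add_sub_cancel] at h1
    rw [← h1, Finset.prod_range_succ]
    simp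
  have hmain : (∏ j ∈ Finset.range (m + 1), Nat.factorial j) ≤
      Nat.card {L : Fin m → Fin m → Fin m //
        (∀ x, Function.Bijective (L x)) ∧ (∀ y, Function.Bijective fun x => L x y)} := by
    rw [hcard, hprodeq]
    exact rect_count m m le_rfl
  refine ⟨hmain, fun hm3 => ?_⟩
  -- the analytic bound
  set e : ℕ := ∑ j ∈ Finset.range (m + 1), (j - 1) with he
  have hesum : e = ∑ j ∈ Finset.range m, j := by
    rw [he, Finset.sum_range_succ']
    simp
  have h2e : e * 2 = m * (m - 1) := by
    rw [hesum]
    exact Finset.sum_range_id_mul_two m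
  have hpowle : 2 ^ e ≤ ∏ j ∈ Finset.range (m + 1), Nat.factorial j := by
    calc (2:ℕ) ^ e = ∏ j ∈ Finset.range (m + 1), 2 ^ (j - 1) :=
          (Finset.prod_pow_eq_pow_sum _ _ _).symm
      _ ≤ ∏ j ∈ Finset.range (m + 1), Nat.factorial j :=
          Finset.prod_le_prod' (fun j _ => two_pow_pred_le_factorial j)
  have hlt : (2 : ℝ) ^ ((m : ℝ) ^ 2 / 4) < ((2 ^ e : ℕ) : ℝ) := by
    have hmR : (3 : ℝ) ≤ (m : ℝ) := by exact_mod_cast hm3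
    have h2eR : (e : ℝ) * 2 = (m : ℝ) * ((m : ℝ) - 1) := by
      have := congrArg (fun n : ℕ => (n : ℝ)) h2e
      push_cast [Nat.cast_sub hm] at this
      convert this using 2
    have hexp : (m : ℝ) ^ 2 / 4 < (e : ℝ) := by nlinarith
    calc (2 : ℝ) ^ ((m : ℝ) ^ 2 / 4) < (2 : ℝ) ^ ((e : ℕ) : ℝ) :=
          Real.rpow_lt_rpow_of_exponent_lt (by norm_num) hexp
      _ = ((2 ^ e : ℕ) : ℝ) := by
          rw [Real.rpow_natCast]
          push_cast
          ring
  have hlt1 : (2 : ℝ) ^ ((m : ℝ) ^ 2 / 4) <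
      ((∏ j ∈ Finset.range (m + 1), Nat.factorial j : ℕ) : ℝ) :=
    lt_of_lt_of_le hlt (by exact_mod_cast hpowle)
  exact ⟨hlt1, lt_of_lt_of_le hlt1 (by exact_mod_cast hmain)⟩
end

section
/- For every integer n ≥ 2, setting m = 2^n, there exists a Latin square L of dimension m such that the function f_L : [m] × [m] × [m] → {0,1}, defined by f_L(x,y,z) = 1 if and only if L[x,y] ≠ z, has the following property: every finite collection of combinatorial boxes X × Y × Z ⊆ [m] × [m] × [m], each of which is 1-monochromatic for f_L (i.e., L[x,y] ≠ z for all (x,y,z) in the box), whose union contains every triple (x,y,z) with L[x,y] ≠ z, has cardinality at least m/12. In particular, the nondeterministic communication complexity of f_L is at least n − log 12. -/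
set_option linter.unusedSectionVars false

section aux

variable {m k : ℕ} [NeZero k] (E : ZMod k × ZMod 2 ≃ Fin m)

/-- The twisted-product Latin square family. -/
private def latinFam (S : ZMod k → ZMod k → ZMod 2) : Fin m → Fin m → Fin m :=
  fun x y => E ((E.symm x).1 + (E.symm y).1,
    (E.symm x).2 + (E.symm y).2 + S (E.symm x).1 (E.symm y).1)

private lemma latinFam_row_bij (S : ZMod k → ZMod k → ZMod 2) (x : Fin m) :
    Function.Bijective (latinFam E S x) := by
  rw [← Finite.injective_iff_bijective]
  intro y₁ y₂ h
  unfold latinFam at h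
  have h' := E.injective h
  have h1 : (E.symm y₁).1 = (E.symm y₂).1 := by
    have := congrArg Prod.fst h'
    simpa using this
  have h2 : (E.symm y₁).2 = (E.symm y₂).2 := by
    have := congrArg Prod.snd h'
    simp only at this
    rw [h1] at this
    exact add_left_cancel (add_right_cancel this)
  have : E.symm y₁ = E.symm y₂ := Prod.ext h1 h2
  exact E.symm.injective this

private lemma latinFam_col_bij (S : ZMod k → ZMod k → ZMod 2) (y : Fin m) :
    Function.Bijective (fun x => latinFam E S x y) := by
  rw [← Finite.injective_iff_bijective]
  intro x₁ x₂ h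
  simp only [latinFam] at h
  have h' := E.injective h
  have h1 : (E.symm x₁).1 = (E.symm x₂).1 := by
    have := congrArg Prod.fst h'
    simpa using this
  have h2 : (E.symm x₁).2 = (E.symm x₂).2 := by
    have := congrArg Prod.snd h'
    simp only at this
    rw [h1] at this
    exact add_right_cancel (add_right_cancel this)
  have : E.symm x₁ = E.symm x₂ := Prod.ext h1 h2
  exact E.symm.injective this

private lemma latinFam_inj : Function.Injective (latinFam E) := by
  intro S₁ S₂ h
  funext p q
  have h0 := congrFun (congrFun h (E (p, 0))) (E (q, 0))
  simp only [latinFam, Equiv.symm_apply_apply] at h0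
  have h' := E.injective h0
  have := congrArg Prod.snd h'
  simpa using this

end aux

/-- For `n ≥ 2` and `m = 2^n` there exists a Latin square `L` of
dimension `m` such that for the function `f_L(x,y,z) = 1 ↔ L[x,y] ≠ z`, every
finite collection of 1-monochromatic combinatorial boxes covering all the
1-inputs of `f_L` has cardinality at least `m/12`; in particular the
nondeterministic communication complexity of `f_L` is at least `n - log 12`. -/
theorem stmt_5 (n : ℕ) (hn : 2 ≤ n) :
    ∃ L : Fin (2 ^ n) → Fin (2 ^ n) → Fin (2 ^ n),
      (∀ x, Function.Bijective (L x)) ∧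
      (∀ y, Function.Bijective fun x => L x y) ∧
      ∀ (t : ℕ) (X Y Z : Fin t → Set (Fin (2 ^ n))),
        (∀ p, ∀ x ∈ X p, ∀ y ∈ Y p, ∀ z ∈ Z p, L x y ≠ z) →
        (∀ x y z, L x y ≠ z → ∃ p, x ∈ X p ∧ y ∈ Y p ∧ z ∈ Z p) →
        ((2 ^ n : ℝ) / 12 ≤ (t : ℝ) ∧
          (n : ℝ) - Real.logb 2 12 ≤ Real.logb 2 t) := by
  by_contra hcon
  push_neg at hcon
  set m := 2 ^ n with hm
  have hm4 : 4 ≤ m := by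
    calc 4 = 2 ^ 2 := by norm_num
    _ ≤ 2 ^ n := Nat.pow_le_pow_right (by norm_num) hn
  set k := 2 ^ (n - 1) with hk
  haveI : NeZero k := ⟨pow_ne_zero _ two_ne_zero⟩
  have hmk : m = k * 2 := by
    rw [hm, hk, ← pow_succ]
    congr 1
    omega
  have hcard : Fintype.card (ZMod k × ZMod 2) = Fintype.card (Fin m) := by
    simp [ZMod.card, hmk]
  let E : ZMod k × ZMod 2 ≃ Fin m := Fintype.equivOfCardEq hcard
  -- the key implication A → B
  have hAB : ∀ t : ℕ, (2 ^ n : ℝ) / 12 ≤ (t : ℝ) →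
      (n : ℝ) - Real.logb 2 12 ≤ Real.logb 2 t := by
    intro t hA
    have hpos : (0 : ℝ) < (2 ^ n : ℝ) / 12 := by positivity
    have h1 : Real.logb 2 ((2 ^ n : ℝ) / 12) ≤ Real.logb 2 t :=
      Real.logb_le_logb_of_le (by norm_num) hpos hA
    have h2 : Real.logb 2 ((2 ^ n : ℝ) / 12)
        = (n : ℝ) - Real.logb 2 12 := by
      rw [Real.logb_div (by positivity) (by norm_num)]
      congr 1
      rw [Real.logb_pow]
      simp [Real.logb_self_eq_one]
    linarith
  -- for every S we extract a small cover
  have key : ∀ S : ZMod k → ZMod k → ZMod 2,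
      ∃ t : ℕ, ∃ X Y Z : Fin t → Set (Fin m),
        (∀ p, ∀ x ∈ X p, ∀ y ∈ Y p, ∀ z ∈ Z p, latinFam E S x y ≠ z) ∧
        (∀ x y z, latinFam E S x y ≠ z → ∃ p, x ∈ X p ∧ y ∈ Y p ∧ z ∈ Z p) ∧
        12 * t < m := by
    intro S
    obtain ⟨t, X, Y, Z, hmono, hcover, hnot⟩ :=
      hcon (latinFam E S) (latinFam_row_bij E S) (latinFam_col_bij E S)
    refine ⟨t, X, Y, Z, hmono, hcover, ?_⟩
    by_contra h12
    push_neg at h12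
    have h12' : (2 ^ n : ℕ) ≤ 12 * t := h12
    have hA : (2 ^ n : ℝ) / 12 ≤ (t : ℝ) := by
      rw [div_le_iff₀ (by norm_num : (0:ℝ) < 12)]
      calc (2:ℝ) ^ n = ((2 ^ n : ℕ) : ℝ) := by push_cast; ring
      _ ≤ ((12 * t : ℕ) : ℝ) := by exact_mod_cast h12'
      _ = (t : ℝ) * 12 := by push_cast; ring
    have hB := hAB t hA
    have := hnot hA
    linarith
  choose t X Y Z hmono hcover hlt using key
  set t₀ := (m - 1) / 12 with ht₀
  have hts : ∀ S, t S ≤ t₀ := by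
    intro S
    rw [ht₀, Nat.le_div_iff_mul_le (by norm_num)]
    have := hlt S
    omega
  let Φ : (ZMod k → ZMod k → ZMod 2) →
      (Fin t₀ → Set (Fin m) × Set (Fin m) × Set (Fin m)) := fun S p =>
    if h : (p : ℕ) < t S
    then (X S ⟨p, h⟩, Y S ⟨p, h⟩, Z S ⟨p, h⟩) else (∅, ∅, ∅)
  have hrec : ∀ S x y z, latinFam E S x y = z ↔
      ∀ p : Fin t₀, ¬(x ∈ (Φ S p).1 ∧ y ∈ (Φ S p).2.1 ∧ z ∈ (Φ S p).2.2) := by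
    intro S x y z
    constructor
    · rintro rfl p ⟨hx, hy, hz⟩
      by_cases h : (p : ℕ) < t S
      · simp only [Φ, dif_pos h] at hx hy hz
        exact hmono S ⟨p, h⟩ x hx y hy _ hz rfl
      · simp only [Φ, dif_neg h] at hx
        exact hx
    · intro hp
      by_contra hne
      obtain ⟨q, hx, hy, hz⟩ := hcover S x y z hne
      have hq : (q : ℕ) < t₀ ∨ (q:ℕ) < t₀ := Or.inl (lt_of_lt_of_le q.isLt (hts S))
      -- dummy
      refine hp ⟨q, lt_of_lt_of_le q.isLt (hts S)⟩ ?_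
      have hqt : ((⟨(q:ℕ), lt_of_lt_of_le q.isLt (hts S)⟩ : Fin t₀) : ℕ) < t S := q.isLt
      simp only [Φ, dif_pos hqt]
      simpa using ⟨hx, hy, hz⟩
  have hΦinj : Function.Injective Φ := by
    intro S₁ S₂ h
    apply latinFam_inj E
    funext x y
    have h1 : latinFam E S₁ x y = latinFam E S₂ x y := by
      rw [hrec S₁, h]
      exact (hrec S₂ x y (latinFam E S₂ x y)).mp rfl
    exact h1
  have hcardle := Fintype.card_le_of_injective Φ hΦinj
  have hset : Fintype.card (Set (Fin m)) = 2 ^ m := by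
    rw [Fintype.card_congr ((Equiv.refl (Set (Fin m))) : Set (Fin m) ≃ (Fin m → Prop))]
    simp [Fintype.card_fun]
  have hdom : Fintype.card (ZMod k → ZMod k → ZMod 2) = 2 ^ (k * k) := by
    simp [Fintype.card_fun, ZMod.card, ← pow_mul]
  have hcod : Fintype.card (Fin t₀ → Set (Fin m) × Set (Fin m) × Set (Fin m))
      = 2 ^ (3 * m * t₀) := by
    rw [Fintype.card_fun]
    rw [Fintype.card_prod, Fintype.card_prod, hset, Fintype.card_fin]
    rw [← pow_add, ← pow_add, ← pow_mul]
    ring_nf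
  rw [hdom, hcod] at hcardle
  have hkk : k * k ≤ 3 * m * t₀ := by
    exact (Nat.pow_le_pow_iff_right (by norm_num)).mp hcardle
  have h12t : t₀ * 12 ≤ m - 1 := Nat.div_mul_le_self _ _
  have hfin : 12 * (k * k) < 12 * (k * k) := by
    calc 12 * (k * k) ≤ 12 * (3 * m * t₀) := by omega
    _ = 3 * m * (12 * t₀) := by ring
    _ ≤ 3 * m * (m - 1) := by
        apply Nat.mul_le_mul_left
        omega
    _ < 3 * m * m := mul_lt_mul_of_pos_left (by omega) (by omega)
    _ = 12 * (k * k) := by rw [hmk]; ring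
  omega
end

section
/- Let k ≥ 2, let f : [m]^k → {0,1}, and let F = {x^1,…,x^t} be a 1-fooling set for f of size t. For each ordered pair (A,B) of nonempty disjoint sets with A ∪ B = [k], let U^{A,B} be the t × t matrix over ℝ with entries U^{A,B}[p,q] = f(σ^{A,B}(x^p, x^q)). Then the entrywise (Hadamard) product of the matrices U^{A,B} over all 2^k − 2 such ordered pairs (A,B) equals the t × t identity matrix. -/
/-- Let `F = {x^1, …, x^t}` be a 1-fooling set for
`f : [m]^k → {0,1}` (with `k ≥ 2`). For each ordered pair `(A, Aᶜ)` of nonempty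
disjoint sets with union `[k]`, let `U^{A,Aᶜ}` be the `t × t` real matrix with
entries `U^{A,Aᶜ}[p,q] = f(σ^{A,Aᶜ}(x^p, x^q))`. Then the entrywise (Hadamard)
product of these `2^k − 2` matrices equals the `t × t` identity matrix. -/
theorem stmt_11 (k m t : ℕ) (hk : 2 ≤ k)
    (f : (Fin k → Fin m) → Bool)
    (x : Fin t → Fin k → Fin m) (hinj : Function.Injective x)
    (h1 : ∀ p, f (x p) = true)
    (hfool : ∀ p q : Fin t, p ≠ q → ∃ S : Finset (Fin k),
      f (fun i => if i ∈ S then x p i else x q i) = false) :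
    (Matrix.of fun p q : Fin t =>
        ∏ A ∈ Finset.univ.filter
            (fun A : Finset (Fin k) => A.Nonempty ∧ Aᶜ.Nonempty),
          (if f (fun i => if i ∈ A then x p i else x q i) then (1 : ℝ) else 0)) =
      (1 : Matrix (Fin t) (Fin t) ℝ) := by
  ext p q
  simp only [Matrix.of_apply, Matrix.one_apply]
  by_cases hpq : p = q
  · subst hpq
    simp only [if_pos rfl]
    apply Finset.prod_eq_one
    intro A _
    have : (fun i => if i ∈ A then x p i else x p i) = x p := by
      funext i; split <;> rfl
    rw [this, h1 p, if_pos rfl]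
  · rw [if_neg hpq]
    obtain ⟨S, hS⟩ := hfool p q hpq
    have hSne : S.Nonempty := by
      rcases S.eq_empty_or_nonempty with h | h
      · exfalso
        subst h
        have : (fun i => if i ∈ (∅ : Finset (Fin k)) then x p i else x q i) = x q := by
          funext i; simp
        rw [this, h1 q] at hS
        exact absurd hS (by simp)
      · exact h
    have hScne : Sᶜ.Nonempty := by
      rcases Sᶜ.eq_empty_or_nonempty with h | h
      · exfalso
        have hSuniv : S = Finset.univ := by
          rwa [Finset.compl_eq_empty_iff] at h
        subst hSuniv
        have : (fun i => if i ∈ (Finset.univ : Finset (Fin k)) then x p i else x q i) = x p := by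
          funext i; simp
        rw [this, h1 p] at hS
        exact absurd hS (by simp)
      · exact h
    apply Finset.prod_eq_zero (i := S)
    · simp [hSne, hScne]
    · rw [hS]; simp
end

section
/- Let n ≥ 1 and let f₁, f₂, f₃ : {0,1}^n × {0,1}^n → {0,1}. Write inputs x = (x₁,x₂), y = (y₁,y₂), z = (z₁,z₂) ∈ {0,1}^n × {0,1}^n, and define the relation R by: the output (i,b) ∈ {1,2,3} × {0,1} is valid for (x,y,z) if (i = 1 and f₁(x₁,y₁) = b) or (i = 2 and f₂(x₂,z₁) = b) or (i = 3 and f₃(y₂,z₂) = b). Suppose 𝒫 is a finite collection of pairwise disjoint combinatorial boxes X × Y × Z (with X, Y, Z ⊆ {0,1}^n × {0,1}^n) whose union is the whole input cube, together with a labelling assigning to each box an output (i,b) that is valid for every input in that box. Then there exists i ∈ {1,2,3} such that f_i admits a cover of its whole domain {0,1}^n × {0,1}^n by at most |𝒫| combinatorial rectangles, each of which is monochromatic for f_i. -/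
/-- Inputs are `x = (x₁,x₂), y = (y₁,y₂), z = (z₁,z₂)` in
`{0,1}^n × {0,1}^n`. The relation `R` accepts output `(i,b)` on `(x,y,z)` iff
`i = 1 ∧ f₁(x₁,y₁) = b`, or `i = 2 ∧ f₂(x₂,z₁) = b`, or `i = 3 ∧ f₃(y₂,z₂) = b`
(here `i` ranges over `Fin 3`, with `0,1,2` playing the roles of `1,2,3`).
Given a finite collection of `t` pairwise disjoint combinatorial boxes
`X p × Y p × Z p` covering the whole input cube, each labelled with an output
`(idx p, bit p)` valid on every input of the box, some `f_i` admits a cover of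
its whole domain by at most `t` monochromatic combinatorial rectangles. -/
theorem stmt_12 (n : ℕ) (hn : 1 ≤ n)
    (f₁ f₂ f₃ : (Fin n → Bool) → (Fin n → Bool) → Bool)
    (t : ℕ)
    (X Y Z : Fin t → Set ((Fin n → Bool) × (Fin n → Bool)))
    (idx : Fin t → Fin 3) (bit : Fin t → Bool)
    (hdisj : ∀ p q : Fin t, p ≠ q →
      ∀ x y z : (Fin n → Bool) × (Fin n → Bool),
        ¬((x ∈ X p ∧ y ∈ Y p ∧ z ∈ Z p) ∧ (x ∈ X q ∧ y ∈ Y q ∧ z ∈ Z q)))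
    (hcover : ∀ x y z : (Fin n → Bool) × (Fin n → Bool),
      ∃ p, x ∈ X p ∧ y ∈ Y p ∧ z ∈ Z p)
    (hvalid : ∀ p, ∀ x ∈ X p, ∀ y ∈ Y p, ∀ z ∈ Z p,
      (idx p = 0 → f₁ x.1 y.1 = bit p) ∧
      (idx p = 1 → f₂ x.2 z.1 = bit p) ∧
      (idx p = 2 → f₃ y.2 z.2 = bit p)) :
    ∃ g : (Fin n → Bool) → (Fin n → Bool) → Bool,
      (g = f₁ ∨ g = f₂ ∨ g = f₃) ∧
      ∃ (s : ℕ) (Xr Wr : Fin s → Set (Fin n → Bool)),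
        s ≤ t ∧
        (∀ p, ∀ a ∈ Xr p, ∀ w ∈ Wr p, ∀ a' ∈ Xr p, ∀ w' ∈ Wr p,
          g a w = g a' w') ∧
        (∀ a w : Fin n → Bool, ∃ p, a ∈ Xr p ∧ w ∈ Wr p) := by
  classical
  have key : (∀ a w : Fin n → Bool, ∃ p, idx p = 0 ∧ a ∈ Prod.fst '' X p ∧
        w ∈ Prod.fst '' Y p ∧ (Z p).Nonempty) ∨
      (∀ a w : Fin n → Bool, ∃ p, idx p = 1 ∧ a ∈ Prod.snd '' X p ∧
        w ∈ Prod.fst '' Z p ∧ (Y p).Nonempty) ∨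
      (∀ a w : Fin n → Bool, ∃ p, idx p = 2 ∧ a ∈ Prod.snd '' Y p ∧
        w ∈ Prod.snd '' Z p ∧ (X p).Nonempty) := by
    by_contra hK
    push_neg at hK
    obtain ⟨h0, h1, h2⟩ := hK
    obtain ⟨a₁, w₁, H0⟩ := h0
    obtain ⟨a₂, w₂, H1⟩ := h1
    obtain ⟨a₃, w₃, H2⟩ := h2
    obtain ⟨p, hx, hy, hz⟩ := hcover (a₁, a₂) (w₁, a₃) (w₂, w₃)
    have i3 : idx p = 0 ∨ idx p = 1 ∨ idx p = 2 := by omega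
    rcases i3 with h | h | h
    · have := H0 p h ⟨(a₁, a₂), hx, rfl⟩ ⟨(w₁, a₃), hy, rfl⟩
      rw [this] at hz; exact hz
    · have := H1 p h ⟨(a₁, a₂), hx, rfl⟩ ⟨(w₂, w₃), hz, rfl⟩
      rw [this] at hy; exact hy
    · have := H2 p h ⟨(w₁, a₃), hy, rfl⟩ ⟨(w₂, w₃), hz, rfl⟩
      rw [this] at hx; exact hx
  rcases key with hC | hC | hC
  · refine ⟨f₁, Or.inl rfl, t,
      (fun p => if idx p = 0 ∧ (Z p).Nonempty then Prod.fst '' X p else ∅),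
      (fun p => if idx p = 0 ∧ (Z p).Nonempty then Prod.fst '' Y p else ∅),
      le_rfl, ?_, ?_⟩
    · intro p a ha w hw a' ha' w' hw'
      by_cases h : idx p = 0 ∧ (Z p).Nonempty
      · simp only [if_pos h] at ha hw ha' hw'
        obtain ⟨x, hx, rfl⟩ := ha
        obtain ⟨y, hy, rfl⟩ := hw
        obtain ⟨x', hx', rfl⟩ := ha'
        obtain ⟨y', hy', rfl⟩ := hw'
        obtain ⟨z, hz⟩ := h.2
        rw [(hvalid p x hx y hy z hz).1 h.1, (hvalid p x' hx' y' hy' z hz).1 h.1]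
      · simp [if_neg h] at ha
    · intro a w
      obtain ⟨p, hi, ha, hw, hne⟩ := hC a w
      exact ⟨p, by simpa [hi, hne] using ha, by simpa [hi, hne] using hw⟩
  · refine ⟨f₂, Or.inr (Or.inl rfl), t,
      (fun p => if idx p = 1 ∧ (Y p).Nonempty then Prod.snd '' X p else ∅),
      (fun p => if idx p = 1 ∧ (Y p).Nonempty then Prod.fst '' Z p else ∅),
      le_rfl, ?_, ?_⟩
    · intro p a ha w hw a' ha' w' hw'
      by_cases h : idx p = 1 ∧ (Y p).Nonempty
      · simp only [if_pos h] at ha hw ha' hw'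
        obtain ⟨x, hx, rfl⟩ := ha
        obtain ⟨z, hz, rfl⟩ := hw
        obtain ⟨x', hx', rfl⟩ := ha'
        obtain ⟨z', hz', rfl⟩ := hw'
        obtain ⟨y, hy⟩ := h.2
        rw [(hvalid p x hx y hy z hz).2.1 h.1, (hvalid p x' hx' y hy z' hz').2.1 h.1]
      · simp [if_neg h] at ha
    · intro a w
      obtain ⟨p, hi, ha, hw, hne⟩ := hC a w
      exact ⟨p, by simpa [hi, hne] using ha, by simpa [hi, hne] using hw⟩
  · refine ⟨f₃, Or.inr (Or.inr rfl), t,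
      (fun p => if idx p = 2 ∧ (X p).Nonempty then Prod.snd '' Y p else ∅),
      (fun p => if idx p = 2 ∧ (X p).Nonempty then Prod.snd '' Z p else ∅),
      le_rfl, ?_, ?_⟩
    · intro p a ha w hw a' ha' w' hw'
      by_cases h : idx p = 2 ∧ (X p).Nonempty
      · simp only [if_pos h] at ha hw ha' hw'
        obtain ⟨y, hy, rfl⟩ := ha
        obtain ⟨z, hz, rfl⟩ := hw
        obtain ⟨y', hy', rfl⟩ := ha'
        obtain ⟨z', hz', rfl⟩ := hw'
        obtain ⟨x, hx⟩ := h.2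
        rw [(hvalid p x hx y hy z hz).2.2 h.1, (hvalid p x hx y' hy' z' hz').2.2 h.1]
      · simp [if_neg h] at ha
    · intro a w
      obtain ⟨p, hi, ha, hw, hne⟩ := hC a w
      exact ⟨p, by simpa [hi, hne] using ha, by simpa [hi, hne] using hw⟩
end
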